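/- arXiv:1201.0355 — 2 statements merged into one kernel-verified Lean document; each statement's English description precedes it below -/
import Mathlib

section
/- Let σ_{αβ} (1 ≤ α < β ≤ k) be the weight of Λ²V with 1 in positions α, β and 0 elsewhere, let λ be dominant integral for sl(k,ℝ) and ρ = (k−1, k−2, …, 1, 0). If λ_(ij) is dominant integral, then the only pair (α,β) for which σ_{αβ} + λ + ρ lies in the Weyl orbit of λ_(ij) + ρ is (α,β) = (i,j), and in that case σ_{ij} + λ + ρ = λ_(ij) + ρ itself is dominant. -/
/-- Among the weights `σ_{αβ}` (α < β) of `Λ²V`, the only one for which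
`σ_{αβ} + λ + ρ` lies in the `S_k`-orbit (coordinate permutations) of
`λ_(ij) + ρ` is `σ_{ij}`, and in that case `σ_{ij} + λ + ρ = λ_(ij) + ρ`
is itself (strictly) dominant.  Here `ρ = (k-1, k-2, …, 1, 0)`. -/
theorem only_sigma_ij_contributes
    {k : ℕ} (i j : Fin k) (hij : i < j)
    (lam : Fin k → ℤ)
    (hlam : ∀ a b : Fin k, a ≤ b → lam b ≤ lam a)
    (lamij : Fin k → ℤ)
    (hlamij : ∀ a, lamij a =
      lam a + (if a = i then 1 else 0) + (if a = j then 1 else 0))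
    (hdomij : ∀ a b : Fin k, a ≤ b → lamij b ≤ lamij a) :
    (∀ α β : Fin k, α < β →
      ((∃ w : Equiv.Perm (Fin k),
          ((fun a => lam a + (if a = α ∨ a = β then 1 else 0)
              + ((k : ℤ) - 1 - (a : ℕ))) ∘ w)
            = fun a => lamij a + ((k : ℤ) - 1 - (a : ℕ)))
        ↔ (α = i ∧ β = j)))
    ∧ StrictAnti (fun a : Fin k =>
        lam a + (if a = i ∨ a = j then 1 else 0) + ((k : ℤ) - 1 - (a : ℕ)))
    ∧ (fun a : Fin k =>
        lam a + (if a = i ∨ a = j then 1 else 0) + ((k : ℤ) - 1 - (a : ℕ)))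
      = fun a => lamij a + ((k : ℤ) - 1 - (a : ℕ)) := by
  have hne : i ≠ j := ne_of_lt hij
  -- Part 3: the function equality
  have hfun : (fun a : Fin k =>
        lam a + (if a = i ∨ a = j then 1 else 0) + ((k : ℤ) - 1 - (a : ℕ)))
      = fun a => lamij a + ((k : ℤ) - 1 - (a : ℕ)) := by
    funext a
    rw [hlamij a]
    rcases eq_or_ne a i with h1 | h1 <;> rcases eq_or_ne a j with h2 | h2
    · exact absurd (h1.symm.trans h2) hne
    · simp [h1, h2, hne]
    · simp [h1, h2, hne.symm, fun h : j = i => hne h.symm]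
    · simp [h1, h2]
  -- Part 2: strict antitonicity of lamij + ρ
  have hanti : StrictAnti (fun a : Fin k => lamij a + ((k : ℤ) - 1 - (a : ℕ))) := by
    intro a b hab
    have h1 : lamij b ≤ lamij a := hdomij a b hab.le
    have h2 : (a : ℕ) < (b : ℕ) := hab
    simp only
    omega
  refine ⟨?_, hfun ▸ hanti, hfun⟩
  intro α β hab
  constructor
  · rintro ⟨w, hw⟩
    set g : Fin k → ℤ := fun a =>
      lam a + (if a = α ∨ a = β then 1 else 0) + ((k : ℤ) - 1 - (a : ℕ)) with hg
    set h : Fin k → ℤ := fun a => lamij a + ((k : ℤ) - 1 - (a : ℕ)) with hh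
    have hm : ∀ a, g (w a) = h a := fun a => congrFun hw a
    -- g is injective
    have hginj : Function.Injective g := by
      intro a b hgab
      have : h (w.symm a) = h (w.symm b) := by
        rw [← hm (w.symm a), ← hm (w.symm b)] ; simp [hgab]
      exact w.symm.injective (hanti.injective this)
    -- g is antitone
    have hgmono : ∀ a b : Fin k, a < b → g b ≤ g a := by
      intro a b hab'
      have h1 : lam b ≤ lam a := hlam a b hab'.le
      have h2 : (a : ℕ) < (b : ℕ) := hab'
      simp only [hg]
      rcases em (a = α ∨ a = β) with h3 | h3 <;>
        rcases em (b = α ∨ b = β) with h4 | h4 <;> simp [h3, h4] <;> omega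
    have hganti : StrictAnti g := by
      intro a b hab'
      exact lt_of_le_of_ne (hgmono a b hab') (fun hgab => (ne_of_lt hab') (hginj hgab).symm)
    -- w is strictly monotone, hence the identity
    have hwmono : StrictMono (w : Fin k → Fin k) := by
      intro a b hab'
      have : g (w b) < g (w a) := by rw [hm a, hm b]; exact hanti hab'
      by_contra hcon
      push_neg at hcon
      rcases lt_or_eq_of_le hcon with h5 | h5
      · exact absurd (hganti h5) (not_lt.mpr this.le)
      · rw [h5] at this; exact lt_irrefl _ this
    have hwid : (w : Fin k → Fin k) = id := by
      refine (hwmono.range_inj strictMono_id).mp ?_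
      rw [Set.range_id, Set.range_eq_univ]
      exact w.surjective
    have hgh : ∀ a, g a = h a := by
      intro a
      have := hm a
      rw [show w a = a from congrFun hwid a] at this
      exact this
    -- evaluate at α and β
    have hαij : α = i ∨ α = j := by
      by_contra hcon
      push_neg at hcon
      have := hgh α
      simp only [hg, hh, hlamij α, hcon.1, hcon.2, if_false, true_or, if_true] at this
      linarith
    have hβij : β = i ∨ β = j := by
      by_contra hcon
      push_neg at hcon
      have := hgh β
      simp only [hg, hh, hlamij β, hcon.1, hcon.2, if_false, or_true, if_true] at this
      linarith
    rcases hαij with h1 | h1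
    · rcases hβij with h2 | h2
      · exact absurd (h1.trans h2.symm) (ne_of_lt hab)
      · exact ⟨h1, h2⟩
    · rcases hβij with h2 | h2
      · rw [h1, h2] at hab
        exact absurd hab (asymm hij)
      · exact absurd (h1.trans h2.symm) (ne_of_lt hab)
  · rintro ⟨rfl, rfl⟩
    exact ⟨Equiv.refl _, by simpa using hfun⟩
end

section
/- Equivariant function derivative along horizontal fields: Let G be a Lie group with Lie subalgebra decomposition g = g_− ⊕ p where g_− is nilpotent, let P = exp(p)-type closed subgroup so that every element of an open set of G is uniquely exp(Y)p with Y ∈ g_−, p ∈ P. For Z ∈ g define f_Z(exp(Y)p) = Ad(p⁻¹)Z. Then for X ∈ g_−, the derivative of f_Z along the vector field X̂ (tangent at exp(Y)p to t ↦ exp(Y)exp(tX)p) is zero; and for Z' ∈ p_+, the derivative of f_Z along Ẑ' equals f_{[Z,Z']}. -/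
open NormedSpace

set_option linter.unnecessarySimpa false

private lemma exp_of_cube_zero {A : Type*} [NormedRing A] [NormedAlgebra ℝ A]
    [CompleteSpace A] (a : A) (h : a * a * a = 0) :
    exp a = 1 + a + (2 : ℝ)⁻¹ • (a * a) := by
  have h3 : a ^ 3 = 0 := by
    rw [pow_succ, pow_two]; exact h
  have : exp a = ∑' n : ℕ, ((n.factorial : ℝ))⁻¹ • a ^ n := by
    rw [exp_eq_tsum ℝ]
  rw [this, tsum_eq_sum (s := Finset.range 3) (by
    intro n hn
    have hn3 : 3 ≤ n := by simpa using hn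
    have : a ^ n = 0 := by
      have : a ^ n = a ^ 3 * a ^ (n - 3) := by
        rw [← pow_add]; congr 1; omega
      rw [this, h3, zero_mul]
    simp [this])]
  simp [Finset.sum_range_succ, Nat.factorial, pow_succ, pow_two]

private lemma exp_mul_exp_two_step {A : Type*} [NormedRing A] [NormedAlgebra ℝ A]
    [CompleteSpace A] (a b : A)
    (haaa : a * a * a = 0) (haab : a * a * b = 0) (haba : a * b * a = 0)
    (habb : a * b * b = 0) (hbaa : b * a * a = 0) (hbab : b * a * b = 0)
    (hbba : b * b * a = 0) (hbbb : b * b * b = 0) :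
    exp a * exp b = exp (a + b + (2 : ℝ)⁻¹ • (a * b - b * a)) := by
  set W : A := a + b + (2 : ℝ)⁻¹ • (a * b - b * a) with hW
  have hWWW : W * W * W = 0 := by
    simp only [hW, mul_add, add_mul, mul_sub, sub_mul, smul_mul_assoc, mul_smul_comm,
      mul_assoc] at *
    simp [haaa, haab, haba, habb, hbaa, hbab, hbba, hbbb, mul_assoc]
  rw [exp_of_cube_zero a haaa, exp_of_cube_zero b hbbb, exp_of_cube_zero W hWWW]
  have hWW : W * W = a * a + a * b + b * a + b * b := by
    simp only [hW, mul_add, add_mul, mul_sub, sub_mul, smul_mul_assoc, mul_smul_comm,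
      smul_smul, mul_assoc, haab, haba, habb, hbaa, hbab, hbba, haaa, hbbb]
    simp only [← mul_assoc, haab, haba, habb, hbaa, hbab, hbba, haaa, hbbb]
    simp only [smul_zero, zero_sub, sub_zero, add_zero, zero_add, smul_neg, neg_zero,
      zero_mul, mul_zero, sub_self]
    abel
  rw [hWW, hW]
  simp only [mul_add, add_mul, smul_mul_assoc, mul_smul_comm, smul_smul, one_mul, mul_one,
    mul_assoc, haab, haba, habb, hbaa, hbab, hbba, haaa, hbbb]
  simp only [← mul_assoc, haab, haba, habb, hbaa, hbab, hbba, haaa, hbbb]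
  simp only [smul_zero, mul_zero, zero_mul, add_zero, zero_add, smul_add, smul_sub]
  module

/-- Derivatives of the `P`-equivariant functions `f_Z` along the preferred vector
fields.  `A` is the (matrix) algebra containing the group and its Lie algebra,
`gneg` is the 2-step nilpotent subalgebra `g₋` (so triple products vanish and it is
closed under the commutator), `pplus ⊆ p` consists of directions whose exponentials
stay in the parabolic subgroup `P`, and `f Z g = Ad(p⁻¹)Z = p⁻¹ Z p` whenever
`g = exp(Y)·p` with `Y ∈ g₋`, `p ∈ P`.  Then:
(1) the derivative of `f_Z` along `t ↦ exp(Y)exp(tX)p` vanishes for `X ∈ g₋`, and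
(2) the derivative along `t ↦ exp(Y)exp(tZ')p` at `0` equals
`f_{[Z,Z']}(exp(Y)p)` for `Z' ∈ p₊`. -/
theorem equivariant_function_derivatives
    {A : Type*} [NormedRing A] [NormedAlgebra ℝ A] [CompleteSpace A]
    (gneg pplus : Submodule ℝ A)
    (hnil : ∀ a ∈ gneg, ∀ b ∈ gneg, ∀ c ∈ gneg, a * b * c = 0)
    (hbr : ∀ a ∈ gneg, ∀ b ∈ gneg, a * b - b * a ∈ gneg)
    (P : Subgroup Aˣ)
    (f : A → A → A)
    (hf : ∀ Z : A, ∀ Y ∈ gneg, ∀ p : Aˣ, p ∈ P →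
      f Z (exp Y * ↑p) = ↑p⁻¹ * Z * ↑p)
    (hPexp : ∀ W ∈ pplus, ∀ t : ℝ, ∀ p : Aˣ, p ∈ P →
      ∃ q : Aˣ, q ∈ P ∧ (q : A) = exp (t • W) * ↑p)
    (Z Y : A) (hY : Y ∈ gneg) (p : Aˣ) (hp : p ∈ P) :
    (∀ X ∈ gneg, ∀ t : ℝ,
      deriv (fun s : ℝ => f Z (exp Y * exp (s • X) * ↑p)) t = 0)
    ∧ (∀ Z' ∈ pplus,
      deriv (fun s : ℝ => f Z (exp Y * exp (s • Z') * ↑p)) 0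
        = f (Z * Z' - Z' * Z) (exp Y * ↑p)) := by
  constructor
  · -- Part 1 : derivative along `g₋` directions vanishes
    intro X hX t
    have hconst : (fun s : ℝ => f Z (exp Y * exp (s • X) * ↑p))
        = fun _ : ℝ => ↑p⁻¹ * Z * ↑p := by
      funext s
      have hb : s • X ∈ gneg := gneg.smul_mem s hX
      have hWmem : Y + s • X + (2 : ℝ)⁻¹ • (Y * (s • X) - (s • X) * Y) ∈ gneg :=
        gneg.add_mem (gneg.add_mem hY hb) (gneg.smul_mem _ (hbr Y hY _ hb))
      have hBCH : exp Y * exp (s • X)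
          = exp (Y + s • X + (2 : ℝ)⁻¹ • (Y * (s • X) - (s • X) * Y)) :=
        exp_mul_exp_two_step Y (s • X)
          (hnil _ hY _ hY _ hY) (hnil _ hY _ hY _ hb) (hnil _ hY _ hb _ hY)
          (hnil _ hY _ hb _ hb) (hnil _ hb _ hY _ hY) (hnil _ hb _ hY _ hb)
          (hnil _ hb _ hb _ hY) (hnil _ hb _ hb _ hb)
      rw [hBCH, hf Z _ hWmem p hp]
    rw [hconst]
    exact deriv_const _ _
  · -- Part 2 : derivative along `p₊` directions
    intro Z' hZ'
    have hrw : (fun s : ℝ => f Z (exp Y * exp (s • Z') * ↑p))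
        = fun s : ℝ => ↑p⁻¹ * exp (s • (-Z')) * Z * exp (s • Z') * ↑p := by
      funext s
      obtain ⟨q, hq, hqv⟩ := hPexp Z' hZ' s p hp
      have h1 : exp Y * exp (s • Z') * ↑p = exp Y * ↑q := by
        rw [hqv, mul_assoc]
      have hinvexp : exp (s • (-Z')) * exp (s • Z') = 1 := by
        rw [← exp_add_of_commute_of_mem_ball (𝕂 := ℝ) (x := s • (-Z')) (y := s • Z') (by simpa using (Commute.refl (s • Z')).neg_left)
          ((expSeries_radius_eq_top ℝ A).symm ▸ edist_lt_top _ _) ((expSeries_radius_eq_top ℝ A).symm ▸ edist_lt_top _ _)]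
        simp
      have hinv : (↑q⁻¹ : A) = ↑p⁻¹ * exp (s • (-Z')) :=
        Units.inv_eq_of_mul_eq_one_left (by
          rw [hqv]
          calc ↑p⁻¹ * exp (s • (-Z')) * (exp (s • Z') * ↑p)
              = ↑p⁻¹ * (exp (s • (-Z')) * exp (s • Z')) * ↑p := by
                simp [mul_assoc]
            _ = 1 := by rw [hinvexp]; simp)
      rw [h1, hf Z Y hY q hq, hinv, hqv]
      simp only [mul_assoc]
    rw [hrw, hf (Z * Z' - Z' * Z) Y hY p hp]
    have hd1 : HasDerivAt (fun s : ℝ => exp (s • (-Z'))) (-Z') 0 := by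
      simpa using hasDerivAt_exp_smul_const (𝕂 := ℝ) (-Z') 0
    have hd2 : HasDerivAt (fun s : ℝ => exp (s • Z')) Z' 0 := by
      simpa using hasDerivAt_exp_smul_const (𝕂 := ℝ) Z' 0
    have hD : HasDerivAt
        (fun s : ℝ => ↑p⁻¹ * exp (s • (-Z')) * Z * exp (s • Z') * ↑p)
        (↑p⁻¹ * (Z * Z' - Z' * Z) * ↑p) 0 := by
      have h := ((((hd1.const_mul (↑p⁻¹ : A)).mul_const Z).mul hd2).mul_const (↑p : A))
      have he : exp ((0 : ℝ) • Z') = (1 : A) := by simp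
      have he' : exp ((0 : ℝ) • (-Z')) = (1 : A) := by simp
      convert h using 1
      · rfl
      rw [he, he']
      noncomm_ring
    rw [hD.deriv]
end
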